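/- Let f be a monotone submodular function with f(∅)=0, and let C = {j₁,…,j_r} be a finite set ordered arbitrarily. Define weights w_i = f({j₁,…,j_i}) - f({j₁,…,j_{i-1}}) (marginal gains). Then for every subset C' ⊆ C, f(C') ≥ ∑_{j_i ∈ C'} w_i. -/

import Mathlib

/-- Let `f` be a monotone submodular function with `f ∅ = 0`, and let `C` be a finite set
given by a duplicate-free list `l = [j₁, …, j_r]` (an arbitrary order).  Define the weight of
the `i`-th element as the marginal gain `w i = f {j₁,…,j_{i+1}} - f {j₁,…,j_i}`.  Then for every
subset `C' ⊆ C`, we have `f C' ≥ ∑_{jᵢ ∈ C'} w i`. -/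
theorem stmt_1 {α : Type*} [DecidableEq α] (f : Finset α → ℝ)
    (hmono : ∀ S T : Finset α, S ⊆ T → f S ≤ f T)
    (hsub : ∀ S T : Finset α, S ⊆ T → ∀ a ∉ T,
      f (insert a T) - f T ≤ f (insert a S) - f S)
    (hempty : f ∅ = 0)
    (l : List α) (hl : l.Nodup)
    (w : ℕ → ℝ)
    (hw : ∀ i : Fin l.length,
      w i = f ((l.take (i + 1)).toFinset) - f ((l.take i).toFinset))
    (C' : Finset α) (hC' : C' ⊆ l.toFinset) :
    ∑ i : Fin l.length, (if l.get i ∈ C' then w i else 0) ≤ f C' := by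
  set g : ℕ → ℝ := fun i =>
    if h : i < l.length then (if l.get ⟨i, h⟩ ∈ C' then w i else 0) else 0 with hg
  have key : ∀ k, k ≤ l.length →
      ∑ i ∈ Finset.range k, g i ≤ f (C' ∩ (l.take k).toFinset) := by
    intro k hk
    induction k with
    | zero => simp [hempty]
    | succ k ih =>
      have hk' : k < l.length := hk
      have htake : (l.take (k + 1)).toFinset
          = insert (l.get ⟨k, hk'⟩) (l.take k).toFinset := by
        rw [List.take_succ, List.toFinset_append, List.getElem?_eq_getElem hk']
        simp
      have hnotmem : l.get ⟨k, hk'⟩ ∉ (l.take k).toFinset := by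
        intro hmem
        rw [List.mem_toFinset] at hmem
        obtain ⟨j, hjlen, hj⟩ := List.getElem_of_mem hmem
        have hjlen' := hjlen
        rw [List.length_take] at hjlen'
        have hjk : j < k := lt_of_lt_of_le hjlen' (min_le_left _ _)
        have hjl : j < l.length := lt_of_lt_of_le hjlen' (min_le_right _ _)
        have h2 : l[j]'hjl = l[k]'hk' := by
          rw [List.getElem_take] at hj; exact hj
        have : j = k := (List.Nodup.getElem_inj_iff hl).mp h2
        omega
      rw [Finset.sum_range_succ]
      by_cases hmem : l.get ⟨k, hk'⟩ ∈ C'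
      · have hgk : g k = w k := by simp only [hg]; rw [dif_pos hk', if_pos hmem]
        rw [hgk]
        have hST : C' ∩ (l.take k).toFinset ⊆ (l.take k).toFinset :=
          Finset.inter_subset_right
        have hsub' := hsub _ _ hST _ hnotmem
        have hwk := hw ⟨k, hk'⟩
        simp only at hwk
        have hins : C' ∩ (l.take (k + 1)).toFinset
            = insert (l.get ⟨k, hk'⟩) (C' ∩ (l.take k).toFinset) := by
          rw [htake, Finset.inter_insert_of_mem hmem]
        rw [hins]
        have := ih (le_of_lt hk')
        rw [hwk, htake]
        linarith
      · have hgk : g k = 0 := by simp only [hg]; rw [dif_pos hk', if_neg hmem]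
        rw [hgk, add_zero]
        refine (ih (le_of_lt hk')).trans (hmono _ _ ?_)
        refine Finset.inter_subset_inter (Finset.Subset.refl _) ?_
        rw [htake]
        exact Finset.subset_insert _ _
  have hfin : ∑ i : Fin l.length, (if l.get i ∈ C' then w i else 0)
      = ∑ i ∈ Finset.range l.length, g i := by
    rw [Finset.sum_range fun i => g i]
    apply Finset.sum_congr rfl
    intro i _
    simp [hg, i.isLt]
  rw [hfin]
  have := key l.length le_rfl
  rwa [List.take_length, Finset.inter_eq_left.mpr hC'] at this
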